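/- Let G be a k-connected graph of order n ≥ 3 with minimum degree δ. If λ₁(K₁ ∇ G) ≤ (δ+1)·√((k+1)/(n−k)), then G is homogeneously traceable. -/

import Mathlib

set_option linter.unusedSectionVars false


open SimpleGraph Finset Matrix
open List

variable {V : Type*} [Fintype V] [DecidableEq V]

def SimpleGraph.IsHamiltonianConnected (G : SimpleGraph V) : Prop :=
  ∀ u v : V, u ≠ v → ∃ p : G.Walk u v, p.IsHamiltonian

def SimpleGraph.IsTraceable (G : SimpleGraph V) : Prop :=
  ∃ (u v : V) (p : G.Walk u v), p.IsHamiltonian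

def SimpleGraph.IsHomogeneouslyTraceable (G : SimpleGraph V) : Prop :=
  ∀ u : V, ∃ (v : V) (p : G.Walk u v), p.IsHamiltonian

/-- `G` is `k`-connected: more than `k` vertices, and removing fewer than `k`
vertices leaves a connected graph. -/
def SimpleGraph.IsKConnected (G : SimpleGraph V) (k : ℕ) : Prop :=
  k < Fintype.card V ∧
    ∀ S : Finset V, S.card < k → (G.induce ((↑S : Set V)ᶜ)).Connected

def SimpleGraph.IsIndependentSet (G : SimpleGraph V) (s : Finset V) : Prop :=
  ∀ u ∈ s, ∀ v ∈ s, ¬ G.Adj u v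

noncomputable def lapHerm (G : SimpleGraph V) [DecidableRel G.Adj] :
    (G.lapMatrix ℝ).IsHermitian := (G.posSemidef_lapMatrix ℝ).1

/-- Laplacian spectral radius μ₁. -/
noncomputable def lapSpecRad (G : SimpleGraph V) [DecidableRel G.Adj] : ℝ :=
  ⨆ i, (lapHerm G).eigenvalues i

noncomputable def adjHerm (G : SimpleGraph V) [DecidableRel G.Adj] :
    (G.adjMatrix ℝ).IsHermitian := by
  rw [Matrix.IsHermitian, conjTranspose_eq_transpose_of_trivial, isSymm_adjMatrix]

/-- Adjacency spectral radius λ₁. -/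
noncomputable def adjSpecRad (G : SimpleGraph V) [DecidableRel G.Adj] : ℝ :=
  ⨆ i, (adjHerm G).eigenvalues i

/-- Smallest adjacency eigenvalue λ_n. -/
noncomputable def adjSpecMin (G : SimpleGraph V) [DecidableRel G.Adj] : ℝ :=
  ⨅ i, (adjHerm G).eigenvalues i

/-- The join `K₁ ∇ G`: a new universal vertex added to `G`. -/
def joinK1 (G : SimpleGraph V) : SimpleGraph (Option V) where
  Adj a b := match a, b with
    | none, none => False
    | none, some _ => True
    | some _, none => True
    | some u, some v => G.Adj u v
  symm := ⟨by rintro (_|u) (_|v) h <;> simp_all [G.adj_symm]⟩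
  loopless := ⟨by rintro (_|u) h <;> simp_all⟩


instance (G : SimpleGraph V) [DecidableRel G.Adj] :
    DecidableRel (joinK1 G).Adj := fun a b =>
  match a, b with
  | none, none => isFalse (fun h => h)
  | none, some _ => isTrue trivial
  | some _, none => isTrue trivial
  | some u, some v => inferInstanceAs (Decidable (G.Adj u v))

lemma rayleigh_le {ι : Type*} [Fintype ι] [DecidableEq ι] [Nonempty ι]
    {A : Matrix ι ι ℝ} (hA : A.IsHermitian) (x : ι → ℝ) :
    x ⬝ᵥ (A *ᵥ x) ≤ (⨆ i, hA.eigenvalues i) * (x ⬝ᵥ x) := by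
  have hbd : ∀ i, hA.eigenvalues i ≤ (⨆ i, hA.eigenvalues i) := fun i =>
    le_ciSup (Set.Finite.bddAbove (Set.finite_range _)) i
  set U : Matrix ι ι ℝ := (hA.eigenvectorUnitary : Matrix ι ι ℝ) with hU
  have hUU : U * Uᵀ = 1 := by
    have := (Matrix.mem_unitaryGroup_iff).mp hA.eigenvectorUnitary.2
    rwa [star_eq_conjTranspose, conjTranspose_eq_transpose_of_trivial] at this
  set y : ι → ℝ := Uᵀ *ᵥ x with hy
  have hyx : y ⬝ᵥ y = x ⬝ᵥ x := by
    rw [hy, dotProduct_mulVec, vecMul_transpose, mulVec_mulVec, hUU, one_mulVec]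
  have hAx : x ⬝ᵥ (A *ᵥ x) = ∑ i, hA.eigenvalues i * (y i * y i) := by
    conv_lhs => rw [hA.spectral_theorem]
    rw [Unitary.conjStarAlgAut_apply, star_eq_conjTranspose, conjTranspose_eq_transpose_of_trivial,
      ← mulVec_mulVec, ← mulVec_mulVec, dotProduct_mulVec (v := x),
      ← mulVec_transpose]
    show y ⬝ᵥ (diagonal (RCLike.ofReal ∘ hA.eigenvalues) *ᵥ y) = _
    simp [dotProduct, mulVec_diagonal, Function.comp]
    exact Finset.sum_congr rfl fun i _ => by ring
  rw [hAx, ← hyx, dotProduct, Finset.mul_sum]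
  exact Finset.sum_le_sum fun i _ => by
    calc hA.eigenvalues i * (y i * y i) ≤ (⨆ i, hA.eigenvalues i) * (y i * y i) :=
      mul_le_mul_of_nonneg_right (hbd i) (mul_self_nonneg _)
    _ = _ := rfl

-- rotation of a cycle list
lemma rot_chain' {α : Type*} {R : α → α → Prop} {d e : List α}
    (h : List.IsChain R (d ++ e))
    (hcl : ∀ x ∈ (d ++ e).getLast?, ∀ y ∈ (d ++ e).head?, R x y) :
    List.IsChain R (e ++ d) ∧
      ∀ x ∈ (e ++ d).getLast?, ∀ y ∈ (e ++ d).head?, R x y := by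
  rcases List.isChain_append.1 h with ⟨hd, he, hj⟩
  rcases eq_or_ne d [] with rfl | hdne
  · simpa using ⟨he, by simpa using hcl⟩
  rcases eq_or_ne e [] with rfl | hene
  · simpa using ⟨hd, by simpa using hcl⟩
  constructor
  · refine List.isChain_append.2 ⟨he, hd, ?_⟩
    intro x hx y hy
    apply hcl
    · rwa [List.getLast?_append_of_ne_nil _ hene]
    · rwa [List.head?_append_of_ne_nil _ hdne]
  · intro x hx y hy
    rw [List.getLast?_append_of_ne_nil _ hdne] at hx
    rw [List.head?_append_of_ne_nil _ hene] at hy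
    exact hj x hx y hy

lemma exists_max_path (G : SimpleGraph V) [Nonempty V] :
    ∃ l : List V, l ≠ [] ∧ l.IsChain G.Adj ∧ l.Nodup ∧
      ∀ l' : List V, l'.IsChain G.Adj → l'.Nodup → l'.length ≤ l.length := by
  classical
  set P : ℕ → Prop := fun m => ∃ l : List V, l.IsChain G.Adj ∧ l.Nodup ∧ l.length = m with hP
  have h1 : P 1 := ⟨[Classical.arbitrary V], by simp, by simp, rfl⟩
  have hbound : ∀ m, P m → m ≤ Fintype.card V := by
    rintro m ⟨l, -, hnd, rfl⟩
    exact hnd.length_le_card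
  have hcard : 1 ≤ Fintype.card V := Fintype.card_pos
  obtain ⟨l, hc, hnd, hlen⟩ := Nat.findGreatest_spec hcard h1
  refine ⟨l, ?_, hc, hnd, ?_⟩
  · intro h; subst h
    have : 1 ≤ Nat.findGreatest P (Fintype.card V) := Nat.le_findGreatest hcard h1
    simp [hlen.symm] at this
  · intro l' hc' hnd'
    have : l'.length ≤ Nat.findGreatest P (Fintype.card V) :=
      Nat.le_findGreatest (hbound _ ⟨l', hc', hnd', rfl⟩) ⟨l', hc', hnd', rfl⟩
    omega

lemma getElem_congr'' {α : Type*} {l : List α} {i j : ℕ} (h : i = j) (hi : i < l.length) :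
    l[i]'hi = l[j]'(h ▸ hi) := by subst h; rfl

lemma getElem_indexOf_eq {α : Type*} [DecidableEq α] {l : List α} {w : α} {i : ℕ}
    (hmem : w ∈ l) (hi : l.idxOf w = i) : ∃ (hlt : i < l.length), l[i]'hlt = w := by
  rw [← hi]; exact ⟨List.idxOf_lt_length_iff.2 hmem, List.getElem_idxOf _⟩

lemma dirac_cycle (G : SimpleGraph V) [DecidableRel G.Adj]
    (hn : 3 ≤ Fintype.card V) (hd : Fintype.card V ≤ 2 * G.minDegree) :
    ∃ c : List V, c ≠ [] ∧ c.Nodup ∧ c.IsChain G.Adj ∧ c.length = Fintype.card V ∧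
      (∀ x ∈ c.getLast?, ∀ y ∈ c.head?, G.Adj x y) := by
  classical
  haveI : Nonempty V := Fintype.card_pos_iff.mp (by omega)
  obtain ⟨l, hne, hc, hnd, hmax⟩ := exists_max_path G
  set n := Fintype.card V with hnn
  set δ := G.minDegree with hδδ
  set m := l.length with hmm
  have hm1 : 1 ≤ m := List.length_pos_iff.2 hne
  have hmn : m ≤ n := hnd.length_le_card
  have hδ2 : 2 ≤ δ := by omega
  set a := l.head hne with ha
  set b := l.getLast hne with hb
  have ha0 : ∀ (p : 0 < m), a = l[0]'p := fun p => by
    rw [ha, List.head_eq_getElem]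
  have hbm : ∀ (p : m - 1 < m), b = l[m-1]'p := fun p => by
    rw [hb, List.getLast_eq_getElem]
  have hflip : (flip G.Adj) = G.Adj := by
    funext x y; exact propext ⟨fun h => h.symm, fun h => h.symm⟩
  have hheadnb : ∀ w, G.Adj w a → w ∈ l := by
    intro w hw
    by_contra hwl
    have hchain : (w :: l).IsChain G.Adj := by
      refine List.isChain_cons.2 ⟨?_, hc⟩
      intro y hy
      rw [List.head?_eq_head hne, Option.mem_some_iff] at hy
      exact hy ▸ hw
    have := hmax (w :: l) hchain (List.nodup_cons.2 ⟨hwl, hnd⟩)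
    simp only [List.length_cons] at this
    omega
  have hrevchain : l.reverse.IsChain G.Adj := by
    rw [List.isChain_reverse, show (fun a b => G.Adj b a) = G.Adj from hflip]; exact hc
  have hlastnb : ∀ w, G.Adj w b → w ∈ l := by
    intro w hw
    by_contra hwl
    have hchain : (w :: l.reverse).IsChain G.Adj := by
      refine List.isChain_cons.2 ⟨?_, hrevchain⟩
      intro y hy
      rw [List.head?_reverse, List.getLast?_eq_getLast hne, Option.mem_some_iff] at hy
      exact hy ▸ hw
    have := hmax (w :: l.reverse) hchain
      (List.nodup_cons.2 ⟨by simpa using hwl, List.nodup_reverse.2 hnd⟩)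
    simp only [List.length_cons, List.length_reverse] at this
    omega
  have hdega : δ ≤ G.degree a := G.minDegree_le_degree a
  have hdegb : δ ≤ G.degree b := G.minDegree_le_degree b
  have hm2 : 2 ≤ m := by
    by_contra h
    have hm : m = 1 := by omega
    obtain ⟨w, hwa⟩ := (G.degree_pos_iff_exists_adj a).1 (lt_of_lt_of_le (show 0 < δ by omega) hdega)
    have hwmem : w ∈ l := hheadnb w hwa.symm
    have hamem : a ∈ l := List.head_mem hne
    obtain ⟨z, hz⟩ := List.length_eq_one_iff.1 (show l.length = 1 by omega)
    rw [hz, List.mem_singleton] at hwmem hamem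
    exact hwa.ne' (hwmem.trans hamem.symm)
  have hnba : ∀ w ∈ G.neighborFinset a, l.idxOf w < m ∧ 1 ≤ l.idxOf w := by
    intro w hw
    have hwa : G.Adj a w := (G.mem_neighborFinset a w).1 hw
    have hwl : w ∈ l := hheadnb w hwa.symm
    have hlt : l.idxOf w < m := List.idxOf_lt_length_iff.2 hwl
    refine ⟨hlt, ?_⟩
    by_contra h0
    obtain ⟨hlt0, hg⟩ := getElem_indexOf_eq hwl (by omega : l.idxOf w = 0)
    exact hwa.ne' (by rw [← hg, ← ha0 hlt0])
  have hnbb : ∀ w ∈ G.neighborFinset b, l.idxOf w < m - 1 := by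
    intro w hw
    have hwb : G.Adj b w := (G.mem_neighborFinset b w).1 hw
    have hwl : w ∈ l := hlastnb w hwb.symm
    have hlt : l.idxOf w < m := List.idxOf_lt_length_iff.2 hwl
    have hne' : l.idxOf w ≠ m - 1 := by
      intro h0
      obtain ⟨hlt0, hg⟩ := getElem_indexOf_eq hwl h0
      exact hwb.ne' (by rw [← hg, ← hbm hlt0])
    omega
  set Sa : Finset ℕ := (G.neighborFinset a).image (fun w => l.idxOf w - 1) with hSa
  set Sb : Finset ℕ := (G.neighborFinset b).image (fun w => l.idxOf w) with hSb
  have hinj : ∀ w1 ∈ l, ∀ w2 ∈ l, l.idxOf w1 = l.idxOf w2 → w1 = w2 := by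
    intro w1 h1 w2 h2 hidx
    obtain ⟨p1, e1⟩ := getElem_indexOf_eq h1 rfl
    obtain ⟨p2, e2⟩ := getElem_indexOf_eq h2 hidx.symm
    exact e1.symm.trans e2
  have hSacard : Sa.card = G.degree a := by
    rw [hSa, Finset.card_image_of_injOn, G.card_neighborFinset_eq_degree]
    intro w1 h1 w2 h2 he
    rw [Finset.mem_coe] at h1 h2
    have q1 := hnba w1 h1; have q2 := hnba w2 h2
    have hw1l : w1 ∈ l := hheadnb w1 ((G.mem_neighborFinset a w1).1 h1).symm
    have hw2l : w2 ∈ l := hheadnb w2 ((G.mem_neighborFinset a w2).1 h2).symm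
    exact hinj w1 hw1l w2 hw2l (by simp only at he; omega)
  have hSbcard : Sb.card = G.degree b := by
    rw [hSb, Finset.card_image_of_injOn, G.card_neighborFinset_eq_degree]
    intro w1 h1 w2 h2 he
    rw [Finset.mem_coe] at h1 h2
    have hw1l : w1 ∈ l := hlastnb w1 ((G.mem_neighborFinset b w1).1 h1).symm
    have hw2l : w2 ∈ l := hlastnb w2 ((G.mem_neighborFinset b w2).1 h2).symm
    exact hinj w1 hw1l w2 hw2l he
  have hSasub : Sa ⊆ Finset.range (m - 1) := by
    intro i hi
    rw [hSa, Finset.mem_image] at hi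
    obtain ⟨w, hw, rfl⟩ := hi
    have := hnba w hw
    rw [Finset.mem_range]; omega
  have hSbsub : Sb ⊆ Finset.range (m - 1) := by
    intro i hi
    rw [hSb, Finset.mem_image] at hi
    obtain ⟨w, hw, rfl⟩ := hi
    have := hnbb w hw
    rw [Finset.mem_range]; omega
  have hinter : (Sa ∩ Sb).Nonempty := by
    rw [← Finset.card_pos]
    have h1 := Finset.card_union_add_card_inter Sa Sb
    have h2 : (Sa ∪ Sb).card ≤ m - 1 := by
      calc (Sa ∪ Sb).card ≤ (Finset.range (m-1)).card :=
        Finset.card_le_card (Finset.union_subset hSasub hSbsub)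
      _ = m - 1 := Finset.card_range _
    omega
  obtain ⟨i, hi⟩ := hinter
  rw [Finset.mem_inter] at hi
  obtain ⟨hia, hib⟩ := hi
  have hirange : i < m - 1 := Finset.mem_range.1 (hSasub hia)
  obtain ⟨wa, hwa, hwai⟩ := Finset.mem_image.1 hia
  obtain ⟨wb, hwb, hwbi⟩ := Finset.mem_image.1 hib
  have hwa' := hnba wa hwa
  have hwb' := hnbb wb hwb
  have hwal : wa ∈ l := hheadnb wa ((G.mem_neighborFinset a wa).1 hwa).symm
  have hwbl : wb ∈ l := hlastnb wb ((G.mem_neighborFinset b wb).1 hwb).symm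
  have hidxa : l.idxOf wa = i + 1 := by omega
  have hidxb : l.idxOf wb = i := by omega
  obtain ⟨pi1, ei1⟩ := getElem_indexOf_eq hwal hidxa
  obtain ⟨pi0, ei0⟩ := getElem_indexOf_eq hwbl hidxb
  have ha' : G.Adj a wa := (G.mem_neighborFinset a wa).1 hwa
  have hb' : G.Adj b wb := (G.mem_neighborFinset b wb).1 hwb
  set x := l.take (i+1) with hx
  set y := l.drop (i+1) with hy
  have hxlen : x.length = i + 1 := by rw [hx, List.length_take]; omega
  have hylen : y.length = m - (i+1) := by rw [hy, List.length_drop]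
  have hxne : x ≠ [] := by intro h; rw [h] at hxlen; simp at hxlen
  have hyne : y ≠ [] := by
    intro h; rw [h] at hylen; simp at hylen; omega
  have hyrne : y.reverse ≠ [] := by simpa using hyne
  set c := x ++ y.reverse with hcc
  have hcperm : c ~ l := by
    calc c ~ x ++ y := (y.reverse_perm).append_left x
    _ = l := List.take_append_drop _ l
  have hcnd : c.Nodup := hcperm.nodup_iff.2 hnd
  have hclen : c.length = m := hcperm.length_eq.trans rfl
  have hxlast : x.getLast hxne = wb := by
    rw [List.getLast_eq_getElem, List.getElem_take, getElem_congr''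
      (by omega : x.length - 1 = i), ei0]
  have hyhead : y.head hyne = wa := by
    rw [List.head_eq_getElem, List.getElem_drop, getElem_congr''
      (by omega : i + 1 + 0 = i + 1), ei1]
  have hylast : y.getLast hyne = b := by
    rw [List.getLast_eq_getElem, List.getElem_drop, getElem_congr''
      (by omega : i + 1 + (y.length - 1) = m - 1), ← hbm (by omega)]
  have hxhead : x.head hxne = a := by
    rw [List.head_eq_getElem, List.getElem_take, ← ha0 (by omega)]
  have hcchain : c.IsChain G.Adj := by
    refine List.isChain_append.2 ⟨hc.take _, ?_, ?_⟩
    · rw [List.isChain_reverse, show (fun a b => G.Adj b a) = G.Adj from hflip]; exact hc.drop _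
    · intro p hp q hq
      rw [List.getLast?_eq_getLast hxne, Option.mem_some_iff] at hp
      rw [List.head?_reverse, List.getLast?_eq_getLast hyne, Option.mem_some_iff] at hq
      subst hp; subst hq
      rw [hxlast, hylast]
      exact hb'.symm
  have hcclose : ∀ p ∈ c.getLast?, ∀ q ∈ c.head?, G.Adj p q := by
    intro p hp q hq
    rw [hcc, List.getLast?_append_of_ne_nil _ hyrne, List.getLast?_reverse,
      List.head?_eq_head hyne, Option.mem_some_iff] at hp
    rw [hcc, List.head?_append_of_ne_nil _ hxne, List.head?_eq_head hxne,
      Option.mem_some_iff] at hq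
    subst hp; subst hq
    rw [hyhead, hxhead]
    exact ha'.symm
  have hcne : c ≠ [] := by
    intro h; rw [h] at hclen; simp at hclen; omega
  rcases eq_or_lt_of_le hmn with hmn' | hmn'
  · exact ⟨c, hcne, hcnd, hcchain, by rw [hclen, hmn'], hcclose⟩
  exfalso
  have hltf : l.toFinset.card = m := by
    rw [List.toFinset_card_of_nodup hnd]
  obtain ⟨v, hv⟩ : (Finset.univ \ l.toFinset).Nonempty := by
    rw [← Finset.card_pos, Finset.card_sdiff_of_subset (Finset.subset_univ _), Finset.card_univ, hltf]
    omega
  have hvl : v ∉ l := by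
    rw [Finset.mem_sdiff] at hv
    simpa using hv.2
  have hml : δ + 1 ≤ m := by
    have hsub : insert a (G.neighborFinset a) ⊆ l.toFinset := by
      intro z hz
      rw [Finset.mem_insert] at hz
      rw [List.mem_toFinset]
      rcases hz with rfl | hz
      · exact List.head_mem hne
      · exact hheadnb z ((G.mem_neighborFinset a z).1 hz).symm
    have := Finset.card_le_card hsub
    rw [Finset.card_insert_of_notMem (G.notMem_neighborFinset_self a),
      G.card_neighborFinset_eq_degree, hltf] at this
    omega
  obtain ⟨w, hwnb, hwl⟩ : ∃ w ∈ G.neighborFinset v, w ∈ l := by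
    by_contra hcon
    push_neg at hcon
    have hsub : G.neighborFinset v ⊆ (Finset.univ \ l.toFinset).erase v := by
      intro z hz
      rw [Finset.mem_erase, Finset.mem_sdiff]
      exact ⟨fun h => (G.notMem_neighborFinset_self v) (h ▸ hz),
        Finset.mem_univ z, by rw [List.mem_toFinset]; exact hcon z hz⟩
    have := Finset.card_le_card hsub
    rw [G.card_neighborFinset_eq_degree] at this
    have hcard : ((Finset.univ \ l.toFinset).erase v).card = n - m - 1 := by
      rw [Finset.card_erase_of_mem hv, Finset.card_sdiff_of_subset (Finset.subset_univ _),
        Finset.card_univ, hltf]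
    have := G.minDegree_le_degree v
    omega
  have hwc : w ∈ c := hcperm.mem_iff.2 hwl
  set j := c.idxOf w with hj
  have hjlt' : j < c.length := List.idxOf_lt_length_iff.2 hwc
  have hjlt : j < m := by omega
  obtain ⟨pj, ej⟩ := getElem_indexOf_eq hwc (rfl : c.idxOf w = j)
  set d := c.take (j+1) with hdd
  set e := c.drop (j+1) with hee
  have hde : d ++ e = c := List.take_append_drop _ c
  have hdlen : d.length = j + 1 := by rw [hdd, List.length_take]; omega
  have hdne : d ≠ [] := by intro h; rw [h] at hdlen; simp at hdlen
  obtain ⟨hrchain, hrclose⟩ := rot_chain' (R := G.Adj) (d := d) (e := e)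
    (by rw [hde]; exact hcchain) (by rw [hde]; exact hcclose)
  have hrperm : (e ++ d) ~ l := (List.perm_append_comm.trans (hde ▸ List.Perm.refl c)).trans hcperm
  have hrlast : ∀ p ∈ (e ++ d).getLast?, p = w := by
    intro p hp
    rw [List.getLast?_append_of_ne_nil _ hdne, List.getLast?_eq_getLast hdne,
      Option.mem_some_iff] at hp
    have hgl : d.getLast hdne = w := by
      rw [List.getLast_eq_getElem, List.getElem_take, getElem_congr''
        (by omega : d.length - 1 = j), ej]
    rw [← hp, hgl]
  set path := (e ++ d) ++ [v] with hpath
  have hpchain : path.IsChain G.Adj := by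
    refine List.isChain_append.2 ⟨hrchain, List.isChain_singleton v, ?_⟩
    intro p hp q hq
    rw [List.head?_cons, Option.mem_some_iff] at hq
    rw [hrlast p hp, ← hq]
    exact ((G.mem_neighborFinset v w).1 hwnb).symm
  have hpnodup : path.Nodup := by
    rw [hpath, List.nodup_append]
    refine ⟨hrperm.nodup_iff.2 hnd, List.nodup_singleton v, ?_⟩
    intro z hz z' hz' hzz
    rw [List.mem_singleton] at hz'
    subst hz'
    subst hzz
    exact hvl (hrperm.subset hz)
  have hple := hmax path hpchain hpnodup
  rw [hpath] at hple
  have hrlen : (e ++ d).length = m := hrperm.length_eq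
  simp only [List.length_append, List.length_singleton] at hple hrlen
  omega

lemma walk_of_chain (G : SimpleGraph V) :
    ∀ (a : V) (t : List V), List.IsChain G.Adj (a :: t) →
      ∃ (v : V) (p : G.Walk a v), p.support = a :: t := by
  intro a t
  induction t generalizing a with
  | nil => exact fun _ => ⟨a, SimpleGraph.Walk.nil, by simp⟩
  | cons b t ih =>
    intro h
    rw [List.isChain_cons_cons] at h
    obtain ⟨v, p, hp⟩ := ih b h.2
    exact ⟨v, SimpleGraph.Walk.cons h.1 p, by rw [SimpleGraph.Walk.support_cons, hp]⟩

lemma dirac_homtrace (G : SimpleGraph V) [DecidableRel G.Adj]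
    (hn : 3 ≤ Fintype.card V) (hd : Fintype.card V ≤ 2 * G.minDegree) (u : V) :
    ∃ (v : V) (p : G.Walk u v), p.IsHamiltonian := by
  classical
  obtain ⟨c, hcne, hnd, hch, hlen, hcl⟩ := dirac_cycle G hn hd
  have huniv : c.toFinset = Finset.univ :=
    Finset.eq_univ_of_card _ (by rw [List.toFinset_card_of_nodup hnd, hlen])
  have hu : u ∈ c := by rw [← List.mem_toFinset, huniv]; exact Finset.mem_univ u
  set j := c.idxOf u with hj
  have hjlt : j < c.length := List.idxOf_lt_length_iff.2 hu
  obtain ⟨pj, ej⟩ := getElem_indexOf_eq hu (rfl : c.idxOf u = j)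
  set d := c.take j with hdd
  set e := c.drop j with hee
  have hde : d ++ e = c := List.take_append_drop _ c
  have helen : e.length = c.length - j := by rw [hee, List.length_drop]
  have hene : e ≠ [] := by intro h; rw [h] at helen; simp at helen; omega
  obtain ⟨hrchain, -⟩ := rot_chain' (R := G.Adj) (d := d) (e := e)
    (by rw [hde]; exact hch) (by rw [hde]; exact hcl)
  have hrperm : (e ++ d) ~ c := List.perm_append_comm.trans (hde ▸ List.Perm.refl c)
  have hrne : e ++ d ≠ [] := by
    intro h
    rw [List.append_eq_nil_iff] at h
    exact hene h.1
  have hdecomp : e = u :: c.drop (j+1) := by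
    rw [hee, ← List.getElem_cons_drop pj, ej]
  obtain ⟨t, ht⟩ : ∃ t, e ++ d = u :: t :=
    ⟨c.drop (j+1) ++ d, by rw [hdecomp]; rfl⟩
  have hchain : List.IsChain G.Adj (u :: t) := by
    have := hrchain
    rw [ht] at this
    exact this
  obtain ⟨v, p, hp⟩ := walk_of_chain G u t hchain
  refine ⟨v, p, ?_⟩
  intro z
  rw [hp, ← ht]
  have hznd : (e ++ d).Nodup := hrperm.nodup_iff.2 hnd
  have hzmem : z ∈ e ++ d := hrperm.mem_iff.2 (by
    rw [← List.mem_toFinset, huniv]; exact Finset.mem_univ z)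
  exact List.count_eq_one_of_mem hznd hzmem

section Aux

lemma kconn_le_minDegree (G : SimpleGraph V) [DecidableRel G.Adj] [Nonempty V] {k : ℕ}
    (hk : G.IsKConnected k) : k ≤ G.minDegree := by
  classical
  by_contra h
  push_neg at h
  obtain ⟨v, hv⟩ := G.exists_minimal_degree_vertex
  set S := G.neighborFinset v with hS
  have hScard : S.card < k := by
    rw [hS, G.card_neighborFinset_eq_degree, ← hv]; exact h
  have hconn := hk.2 S hScard
  have hvS : v ∈ ((↑S : Set V)ᶜ : Set V) := by
    simp only [Set.mem_compl_iff, Finset.mem_coe, hS]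
    exact G.notMem_neighborFinset_self v
  obtain ⟨w, hw⟩ : ((Finset.univ \ S).erase v).Nonempty := by
    rw [← Finset.card_pos, Finset.card_erase_of_mem
      (Finset.mem_sdiff.2 ⟨Finset.mem_univ v, G.notMem_neighborFinset_self v⟩),
      Finset.card_sdiff_of_subset (Finset.subset_univ _), Finset.card_univ]
    have h1 := hk.1
    have h2 : (G.neighborFinset v).card < k := hScard
    omega
  rw [Finset.mem_erase, Finset.mem_sdiff] at hw
  have hwS : w ∈ ((↑S : Set V)ᶜ : Set V) := by
    simp only [Set.mem_compl_iff, Finset.mem_coe]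
    exact hw.2.2
  have hreach := hconn.preconnected ⟨v, hvS⟩ ⟨w, hwS⟩
  obtain ⟨p⟩ := hreach
  cases p with
  | nil => exact hw.1 rfl
  | @cons _ u _ hadj q =>
    have hadj' : G.Adj v ↑u := hadj
    have hu2 : (↑u : V) ∉ S := by
      have h3 : (↑u : V) ∈ ((↑S : Set V)ᶜ : Set V) := u.2
      intro hmem
      exact h3 (Finset.mem_coe.2 hmem)
    exact hu2 ((G.mem_neighborFinset v ↑u).2 hadj')

lemma joinK1_degree_none (G : SimpleGraph V) [DecidableRel G.Adj] :
    (joinK1 G).degree none = Fintype.card V := by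
  classical
  rw [← SimpleGraph.card_neighborFinset_eq_degree]
  have : (joinK1 G).neighborFinset none = Finset.univ.image some := by
    ext b
    rw [SimpleGraph.mem_neighborFinset]
    cases b with
    | none =>
      exact iff_of_false (fun h => h) (by simp)
    | some w =>
      exact iff_of_true trivial (Finset.mem_image_of_mem some (Finset.mem_univ w))
  rw [this, Finset.card_image_of_injective _ (Option.some_injective V), Finset.card_univ]

lemma joinK1_degree_some (G : SimpleGraph V) [DecidableRel G.Adj] (v : V) :
    (joinK1 G).degree (some v) = G.degree v + 1 := by
  classical
  rw [← SimpleGraph.card_neighborFinset_eq_degree, ← SimpleGraph.card_neighborFinset_eq_degree]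
  have : (joinK1 G).neighborFinset (some v) =
      insert none ((G.neighborFinset v).image some) := by
    ext b
    rw [SimpleGraph.mem_neighborFinset]
    cases b with
    | none =>
      refine iff_of_true trivial (Finset.mem_insert_self none _)
    | some w =>
      constructor
      · intro h
        exact Finset.mem_insert_of_mem (Finset.mem_image_of_mem some
          ((G.mem_neighborFinset v w).2 h))
      · intro h
        rcases Finset.mem_insert.1 h with h' | h'
        · exact absurd h' (by simp)
        · obtain ⟨z, hz, hzw⟩ := Finset.mem_image.1 h'
          cases hzw
          exact (G.mem_neighborFinset v w).1 hz
  rw [this, Finset.card_insert_of_notMem (by simp),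
    Finset.card_image_of_injective _ (Option.some_injective V)]

end Aux

theorem spectral_homogeneously_traceable (G : SimpleGraph V) [DecidableRel G.Adj] (k : ℕ)
    (hn : 3 ≤ Fintype.card V) (hk : G.IsKConnected k)
    (hlam : adjSpecRad (joinK1 G) ≤
      ((G.minDegree : ℝ) + 1) * Real.sqrt (((k : ℝ) + 1) / ((Fintype.card V : ℝ) - k))) :
    G.IsHomogeneouslyTraceable := by
  classical
  haveI : Nonempty V := Fintype.card_pos_iff.mp (by omega)
  set n := Fintype.card V with hnn
  set δ := G.minDegree with hδδ
  set lam := adjSpecRad (joinK1 G) with hlam1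
  have hray := rayleigh_le (adjHerm (joinK1 G)) (fun _ => (1:ℝ))
  have hmul : ∀ w : Option V,
      ((joinK1 G).adjMatrix ℝ *ᵥ (fun _ => (1:ℝ))) w = ((joinK1 G).degree w : ℝ) := by
    intro w
    have h0 := SimpleGraph.adjMatrix_mulVec_const_apply
      (G := joinK1 G) (α := ℝ) (a := (1:ℝ)) (v := w)
    simpa using h0
  have hdot : (fun _ => (1:ℝ)) ⬝ᵥ ((joinK1 G).adjMatrix ℝ *ᵥ (fun _ => (1:ℝ)))
      = ∑ w : Option V, ((joinK1 G).degree w : ℝ) := by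
    rw [dotProduct]
    exact Finset.sum_congr rfl fun w _ => by rw [hmul w, one_mul]
  have hxx : (fun _ => (1:ℝ)) ⬝ᵥ (fun _ : Option V => (1:ℝ)) = ((n:ℝ)+1) := by
    rw [dotProduct]
    simp only [mul_one]
    rw [Finset.sum_const, Finset.card_univ, Fintype.card_option, nsmul_eq_mul]
    push_cast
    ring
  have hspec : (⨆ i, (adjHerm (joinK1 G)).eigenvalues i) = lam := rfl
  rw [hdot, hxx, hspec] at hray
  have hsumdeg : ∑ w : Option V, ((joinK1 G).degree w : ℝ)
      = (n : ℝ) + ∑ v : V, ((G.degree v : ℝ) + 1) := by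
    rw [Fintype.sum_option, joinK1_degree_none]
    congr 1
    exact Finset.sum_congr rfl fun v _ => by
      rw [joinK1_degree_some]; push_cast; ring
  have hdegge : ∀ v : V, (δ:ℝ) ≤ (G.degree v : ℝ) := fun v => by
    exact_mod_cast G.minDegree_le_degree v
  have hsumge : (n:ℝ) + (n:ℝ) * ((δ:ℝ)+1) ≤ ∑ w : Option V, ((joinK1 G).degree w : ℝ) := by
    rw [hsumdeg]
    have h1 : ∑ _v : V, ((δ:ℝ)+1) ≤ ∑ v : V, ((G.degree v:ℝ)+1) :=
      Finset.sum_le_sum fun v _ => by have := hdegge v; linarith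
    rw [Finset.sum_const, Finset.card_univ, nsmul_eq_mul] at h1
    linarith
  have key : (n:ℝ) + (n:ℝ)*((δ:ℝ)+1) ≤ lam * ((n:ℝ)+1) := le_trans hsumge hray
  have hdn : δ + 1 ≤ n := by
    have h1 := G.degree_lt_card_verts (Classical.arbitrary V)
    have h2 := G.minDegree_le_degree (Classical.arbitrary V)
    omega
  have hdncast : (δ:ℝ) + 1 ≤ (n:ℝ) := by exact_mod_cast hdn
  have hn1pos : (0:ℝ) < (n:ℝ) + 1 := by positivity
  have hlamge : (δ:ℝ) + 1 ≤ lam := by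
    have h5 : ((δ:ℝ)+1)*((n:ℝ)+1) ≤ lam*((n:ℝ)+1) := by nlinarith [key]
    exact le_of_mul_le_mul_right h5 hn1pos
  have hkn : k < n := hk.1
  have hnkpos : (0:ℝ) < (n:ℝ) - (k:ℝ) := by
    have : (k:ℝ) < (n:ℝ) := by exact_mod_cast hkn
    linarith
  have hδpos : (0:ℝ) < (δ:ℝ)+1 := by positivity
  have hsq : (1:ℝ) ≤ Real.sqrt (((k:ℝ)+1)/((n:ℝ)-k)) := by
    have h2 : (δ:ℝ)+1 ≤ ((δ:ℝ)+1) * Real.sqrt (((k:ℝ)+1)/((n:ℝ)-k)) :=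
      le_trans hlamge hlam
    exact (le_mul_iff_one_le_right hδpos).1 h2
  have hq : (1:ℝ) ≤ ((k:ℝ)+1)/((n:ℝ)-k) := Real.one_le_sqrt.1 hsq
  have hnk : (n:ℝ) - k ≤ (k:ℝ)+1 := by
    rw [le_div_iff₀ hnkpos] at hq
    linarith
  have hn2k1 : n ≤ 2*k+1 := by
    have : (n:ℝ) ≤ 2*(k:ℝ)+1 := by linarith
    exact_mod_cast this
  have h2δ : n ≤ 2*δ := by
    by_cases hcase : n ≤ 2*k
    · have := kconn_le_minDegree G hk
      omega
    · have hneq : n = 2*k+1 := by omega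
      have hone : ((k:ℝ)+1)/((n:ℝ)-k) = 1 := by
        rw [div_eq_one_iff_eq (ne_of_gt hnkpos), hneq]
        push_cast
        ring
      rw [hone, Real.sqrt_one, mul_one] at hlam
      have hr : (n:ℝ) ≤ (δ:ℝ)+1 := by
        nlinarith [key, mul_le_mul_of_nonneg_right hlam hn1pos.le]
      have : n ≤ δ+1 := by exact_mod_cast hr
      omega
  intro u
  exact dirac_homtrace G hn h2δ u
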